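/- Let $I \subset K[x_1,\dots,x_n]$ be a monomial ideal without embedded associated primes, with minimal irreducible decomposition $I = \bigcap_{j=1}^r \langle x_i^{w_{j,i}} : i \in A_j\rangle$. Suppose the set $X_I$ of pairs $(k,l)$ with $k < l$ for which there is $i \in A_k \cap A_l$ with $w_{k,i} \ne w_{l,i}$ is non-empty, and that for each $(k,l) \in X_I$ one has $A_j \not\subset A_k \cup A_l$ for every $j \in [r]\setminus\{k,l\}$. Then there exists $s \ge 1$ with $I^{(s)} \ne I^s$; in fact, writing $w_2 = \alpha w_1 + \beta$ ($0 \le \beta < w_1$) for the minimum $w_1$ and maximum $w_2$ of $\{w_{j,i_0} : i_0 \in A_j\}$ for a suitable common vertex $i_0$, one has $I^{(\alpha+1)} \not\subset I^{\alpha+1}$. -/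

import Mathlib

open MvPolynomial Finset

/-- The monomial `x^a` in `K[x_1,…,x_n]`. -/
noncomputable def mon {K : Type*} [Field K] {n : ℕ} (a : Fin n → ℕ) :
    MvPolynomial (Fin n) K :=
  MvPolynomial.monomial (Finsupp.equivFunOnFinite.symm a) 1

/-- `α(L)`: the least total degree of a nonzero monomial of `L`. -/
noncomputable def alphaI {K σ : Type*} [Field K] (L : Ideal (MvPolynomial σ K)) : ℕ :=
  sInf {d : ℕ | ∃ m : σ →₀ ℕ, (m.sum fun _ e => e) = d ∧ MvPolynomial.monomial m (1 : K) ∈ L}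

/-- The weighted ideal `I_w`, generated by `x^{w(a)}` for monomials `x^a ∈ I`. -/
noncomputable def wIdeal {K : Type*} [Field K] {n : ℕ} (w : Fin n → ℕ)
    (I : Ideal (MvPolynomial (Fin n) K)) : Ideal (MvPolynomial (Fin n) K) :=
  Ideal.span {f | ∃ a : Fin n → ℕ, mon (K := K) a ∈ I ∧ f = mon (K := K) (fun i => w i * a i)}

/-- The irreducible monomial ideal `⟨x_i^{w i} : i ∈ A⟩`. -/
noncomputable def qIdeal {K : Type*} [Field K] {n : ℕ} (A : Finset (Fin n)) (w : Fin n → ℕ) :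
    Ideal (MvPolynomial (Fin n) K) :=
  Ideal.span ((fun i => (X i : MvPolynomial (Fin n) K) ^ w i) '' ↑A)

/-- `I` is a monomial ideal. -/
def IsMonomialIdeal {K : Type*} [Field K] {n : ℕ} (I : Ideal (MvPolynomial (Fin n) K)) : Prop :=
  ∃ S : Set (Fin n → ℕ), I = Ideal.span ((mon (K := K)) '' S)

/-- The `s`-th symbolic power `I^{(s)} = ⋂_{p ∈ Ass(I)} (I^s R_p ∩ R)`. -/
noncomputable def symbPow {R : Type*} [CommRing R] (I : Ideal R) (s : ℕ) : Ideal R :=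
  ⨅ p : {p : Ideal R // p ∈ associatedPrimes R (R ⧸ I)},
    letI : p.1.IsPrime := p.2.isPrime
    Ideal.comap (algebraMap R (Localization.AtPrime p.1))
      (Ideal.map (algebraMap R (Localization.AtPrime p.1)) (I ^ s))

section Aux

variable {K : Type*} [Field K] {n : ℕ}

lemma qIdeal_eq_span' (A : Finset (Fin n)) (w : Fin n → ℕ) :
    qIdeal (K := K) A w =
      Ideal.span ((fun m => monomial m (1 : K)) ''
        {m | ∃ i ∈ A, m = Finsupp.single i (w i)}) := by
  unfold qIdeal
  congr 1
  ext f
  constructor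
  · rintro ⟨i, hi, rfl⟩
    exact ⟨Finsupp.single i (w i), ⟨i, hi, rfl⟩, (X_pow_eq_monomial).symm⟩
  · rintro ⟨m, ⟨i, hi, rfl⟩, rfl⟩
    exact ⟨i, hi, X_pow_eq_monomial⟩

lemma mem_qIdeal_iff' (A : Finset (Fin n)) (w : Fin n → ℕ) (m : Fin n →₀ ℕ) :
    monomial m (1 : K) ∈ qIdeal (K := K) A w ↔ ∃ i ∈ A, w i ≤ m i := by
  rw [qIdeal_eq_span', mem_ideal_span_monomial_image]
  simp [support_monomial]

lemma mon_mem_of_le' {J : Ideal (MvPolynomial (Fin n) K)} {d c : Fin n →₀ ℕ}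
    (h : d ≤ c) (hd : monomial d (1 : K) ∈ J) : monomial c (1 : K) ∈ J := by
  have : monomial c (1 : K) = monomial (c - d) (1 : K) * monomial d (1 : K) := by
    rw [monomial_mul, one_mul, tsub_add_cancel_of_le h]
  rw [this]
  exact Ideal.mul_mem_left _ _ hd

lemma span_pow_le' (S : Set (Fin n →₀ ℕ)) (s : ℕ) :
    (Ideal.span ((fun m => monomial m (1 : K)) '' S)) ^ s ≤
      Ideal.span ((fun m => monomial m (1 : K)) ''
        {c | ∃ f : ℕ → (Fin n →₀ ℕ), (∀ t < s, f t ∈ S) ∧ c = ∑ t ∈ Finset.range s, f t}) := by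
  classical
  induction s with
  | zero =>
    rw [pow_zero, Ideal.one_eq_top, top_le_iff, Ideal.eq_top_iff_one]
    have h1 : (1 : MvPolynomial (Fin n) K) = monomial 0 1 := by simp
    exact h1 ▸ Ideal.subset_span ⟨0, ⟨fun _ => 0, by simp, by simp⟩, rfl⟩
  | succ s ih =>
    rw [pow_succ]
    refine Ideal.mul_le.mpr fun a ha b hb => ?_
    have ha' := ih ha
    rw [mem_ideal_span_monomial_image] at ha' hb ⊢
    intro m hm
    obtain ⟨ma, hma, mb, hmb, rfl⟩ : ∃ ma ∈ a.support, ∃ mb ∈ b.support, m = ma + mb := by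
      have := MvPolynomial.support_mul a b hm
      rw [Finset.mem_add] at this
      obtain ⟨x, hx, y, hy, hxy⟩ := this
      exact ⟨x, hx, y, hy, hxy.symm⟩
    obtain ⟨ca, ⟨f, hf, rfl⟩, hca⟩ := ha' ma hma
    obtain ⟨cb, hcb, hcbl⟩ := hb mb hmb
    refine ⟨(∑ t ∈ Finset.range s, f t) + cb, ⟨fun t => if t = s then cb else f t, ?_, ?_⟩,
      add_le_add hca hcbl⟩
    · intro t ht
      dsimp only
      rcases Nat.lt_succ_iff_lt_or_eq.mp ht with h | h
      · rw [if_neg h.ne]; exact hf t h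
      · rw [if_pos h]; exact hcb
    · dsimp only
      rw [Finset.sum_range_succ, if_pos rfl]
      congr 1
      exact (Finset.sum_congr rfl fun t ht => by
        rw [if_neg (Finset.mem_range.mp ht).ne]).symm

lemma iInf_qIdeal_le_span' {r : ℕ} (A : Fin r → Finset (Fin n)) (w : Fin r → Fin n → ℕ) :
    (⨅ j, qIdeal (K := K) (A j) (w j)) ≤
      Ideal.span ((fun m => monomial m (1 : K)) ''
        {m | ∀ j, ∃ i ∈ A j, w j i ≤ m i}) := by
  intro p hp
  rw [mem_ideal_span_monomial_image]
  intro m hm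
  refine ⟨m, fun j => ?_, le_rfl⟩
  have hj : p ∈ qIdeal (K := K) (A j) (w j) := (Submodule.mem_iInf _).mp hp j
  rw [qIdeal_eq_span', mem_ideal_span_monomial_image] at hj
  obtain ⟨si, ⟨i, hi, rfl⟩, hle⟩ := hj m hm
  exact ⟨i, hi, Finsupp.single_le_iff.mp hle⟩

lemma exists_decomp_of_mem_pow' {r : ℕ} (A : Fin r → Finset (Fin n)) (w : Fin r → Fin n → ℕ)
    {c : Fin n →₀ ℕ} {s : ℕ}
    (h : monomial c (1 : K) ∈ (⨅ j, qIdeal (K := K) (A j) (w j)) ^ s) :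
    ∃ f : ℕ → (Fin n →₀ ℕ), (∀ t < s, ∀ j, ∃ i ∈ A j, w j i ≤ f t i) ∧
      ∑ t ∈ Finset.range s, f t ≤ c := by
  have h1 := Ideal.pow_right_mono (iInf_qIdeal_le_span' (K := K) A w) s
  have h2 := span_pow_le' (K := K) {m : Fin n →₀ ℕ | ∀ j, ∃ i ∈ A j, w j i ≤ m i} s
  have h3 := h2 (h1 h)
  rw [mem_ideal_span_monomial_image] at h3
  have hc : c ∈ (monomial c (1 : K)).support := by
    rw [mem_support_iff]; simp
  obtain ⟨c', ⟨f, hf, rfl⟩, hle⟩ := h3 c hc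
  exact ⟨f, hf, hle⟩

end Aux

/-- if `X_I ≠ ∅` and `A_j ⊄ A_k ∪ A_l` for all `(k,l) ∈ X_I` and
`j ∉ {k,l}`, then `I` is not Simis; in fact `I^{(α+1)} ⊄ I^{α+1}` where
`α = ⌊w₂/w₁⌋` for the min/max weights at a witnessing common vertex. -/
theorem not_simis_of_XI_nonempty {K : Type*} [Field K] {n r : ℕ}
    (A : Fin r → Finset (Fin n)) (w : Fin r → Fin n → ℕ)
    (hApos : ∀ j, (A j).Nonempty)
    (hwpos : ∀ j, ∀ i ∈ A j, 0 < w j i)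
    (hnoemb : ∀ j k, A j ⊆ A k → j = k)
    (hirr : ∀ j : Fin r,
      ¬ (⨅ k : {k : Fin r // k ≠ j}, qIdeal (K := K) (A k.1) (w k.1)) ≤ qIdeal (A j) (w j))
    (hX : ∃ k l : Fin r, k < l ∧ ∃ i, i ∈ A k ∧ i ∈ A l ∧ w k i ≠ w l i)
    (hcond : ∀ k l : Fin r, (k < l ∧ ∃ i, i ∈ A k ∧ i ∈ A l ∧ w k i ≠ w l i) →
      ∀ j, j ≠ k → j ≠ l → ¬ (↑(A j) : Set (Fin n)) ⊆ ↑(A k) ∪ ↑(A l)) :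
    (∃ s : ℕ, 1 ≤ s ∧
      ¬ (⨅ j, (qIdeal (K := K) (A j) (w j)) ^ s) ≤ (⨅ j, qIdeal (K := K) (A j) (w j)) ^ s) ∧
    (∀ k l : Fin r, ∀ i0 : Fin n, k < l → i0 ∈ A k → i0 ∈ A l → w k i0 ≠ w l i0 →
      ¬ (⨅ j, (qIdeal (K := K) (A j) (w j)) ^
            (sSup {m : ℕ | ∃ j, i0 ∈ A j ∧ m = w j i0} /
              sInf {m : ℕ | ∃ j, i0 ∈ A j ∧ m = w j i0} + 1)) ≤
          (⨅ j, qIdeal (K := K) (A j) (w j)) ^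
            (sSup {m : ℕ | ∃ j, i0 ∈ A j ∧ m = w j i0} /
              sInf {m : ℕ | ∃ j, i0 ∈ A j ∧ m = w j i0} + 1)) := by
  classical
  suffices hmain : ∀ k l : Fin r, ∀ i0 : Fin n, k < l → i0 ∈ A k → i0 ∈ A l → w k i0 ≠ w l i0 →
      ¬ (⨅ j, (qIdeal (K := K) (A j) (w j)) ^
            (sSup {m : ℕ | ∃ j, i0 ∈ A j ∧ m = w j i0} /
              sInf {m : ℕ | ∃ j, i0 ∈ A j ∧ m = w j i0} + 1)) ≤
          (⨅ j, qIdeal (K := K) (A j) (w j)) ^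
            (sSup {m : ℕ | ∃ j, i0 ∈ A j ∧ m = w j i0} /
              sInf {m : ℕ | ∃ j, i0 ∈ A j ∧ m = w j i0} + 1) by
    refine ⟨?_, hmain⟩
    obtain ⟨k, l, hkl, i0, hk0, hl0, hne⟩ := hX
    exact ⟨_, Nat.succ_le_succ (Nat.zero_le _), hmain k l i0 hkl hk0 hl0 hne⟩
  intro k l i0 hkl hk0 hl0 hne
  -- basic facts about the weight set
  set S0 : Set ℕ := {m : ℕ | ∃ j, i0 ∈ A j ∧ m = w j i0} with hS0
  have hS0ne : S0.Nonempty := ⟨w k i0, k, hk0, rfl⟩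
  have hbdd : BddAbove S0 := by
    refine ⟨Finset.univ.sup (fun j => w j i0), ?_⟩
    rintro m ⟨j, _, rfl⟩
    exact Finset.le_sup (f := fun j => w j i0) (Finset.mem_univ j)
  set w1 : ℕ := sInf S0 with hw1
  set w2 : ℕ := sSup S0 with hw2
  obtain ⟨jmin, hjmin0, hjminw⟩ : w1 ∈ S0 := Nat.sInf_mem hS0ne
  obtain ⟨jmax, hjmax0, hjmaxw⟩ : w2 ∈ S0 := Nat.sSup_mem hS0ne hbdd
  have hle1 : ∀ m ∈ S0, w1 ≤ m := fun m hm => Nat.sInf_le hm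
  have hle2 : ∀ m ∈ S0, m ≤ w2 := fun m hm => le_csSup hbdd hm
  have hkS : w k i0 ∈ S0 := ⟨k, hk0, rfl⟩
  have hlS : w l i0 ∈ S0 := ⟨l, hl0, rfl⟩
  have hw1w2 : w1 < w2 := by
    have h1 := hle1 _ hkS
    have h2 := hle2 _ hkS
    have h3 := hle1 _ hlS
    have h4 := hle2 _ hlS
    omega
  have hw1pos : 0 < w1 := hjminw ▸ hwpos jmin i0 hjmin0
  set al : ℕ := w2 / w1 with hal
  have halpha : w2 < (al + 1) * w1 := by
    have h1 : w1 * al + w2 % w1 = w2 := Nat.div_add_mod w2 w1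
    have h2 : w2 % w1 < w1 := Nat.mod_lt _ hw1pos
    calc w2 = w1 * al + w2 % w1 := h1.symm
      _ < w1 * al + w1 := Nat.add_lt_add_left h2 _
      _ = (al + 1) * w1 := by ring
  set s : ℕ := al + 1 with hs
  have hjne : jmin ≠ jmax := by
    intro h
    rw [hjminw, hjmaxw, h] at hw1w2
    exact lt_irrefl _ hw1w2
  have hwne2 : w jmin i0 ≠ w jmax i0 := by
    rw [← hjminw, ← hjmaxw]; exact hw1w2.ne
  -- selection of auxiliary vertices
  have hpairX : ∀ j, j ≠ jmin → j ≠ jmax → ∃ i ∈ A j, i ∉ A jmin ∧ i ∉ A jmax := by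
    intro j h1 h2
    rcases lt_trichotomy jmin jmax with h | h | h
    · have hc := hcond jmin jmax ⟨h, i0, hjmin0, hjmax0, hwne2⟩ j h1 h2
      obtain ⟨i, hij, hni⟩ := Set.not_subset.mp hc
      rw [Set.mem_union] at hni
      push_neg at hni
      exact ⟨i, hij, by simpa using hni.1, by simpa using hni.2⟩
    · exact absurd h hjne
    · have hc := hcond jmax jmin ⟨h, i0, hjmax0, hjmin0, hwne2.symm⟩ j h2 h1
      obtain ⟨i, hij, hni⟩ := Set.not_subset.mp hc
      rw [Set.mem_union] at hni
      push_neg at hni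
      exact ⟨i, hij, by simpa using hni.2, by simpa using hni.1⟩
  have himax : ∃ i ∈ A jmax, i ∉ A jmin := by
    by_contra h
    push_neg at h
    exact hjne ((hnoemb jmax jmin h).symm)
  have hsel : ∀ j : Fin r, ∃ i : Fin n,
      i ∈ A j ∧ (j ≠ jmin → i ∉ A jmin) ∧ (j ≠ jmin → j ≠ jmax → i ∉ A jmax) := by
    intro j
    by_cases h1 : j = jmin
    · exact ⟨i0, h1 ▸ hjmin0, fun h => absurd h1 h, fun h _ => absurd h1 h⟩
    by_cases h2 : j = jmax
    · obtain ⟨i, hiA, hni⟩ := himax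
      exact ⟨i, h2 ▸ hiA, fun _ => hni, fun _ h => absurd h2 h⟩
    · obtain ⟨i, hiA, hn1, hn2⟩ := hpairX j h1 h2
      exact ⟨i, hiA, fun _ => hn1, fun _ _ => hn2⟩
  choose ι hι1 hι2 hι3 using hsel
  have hιne : ∀ j, j ≠ jmin → ι j ≠ i0 := fun j h he => (hι2 j h) (he ▸ hjmin0)
  -- the witness exponent
  set g : Fin r → (Fin n →₀ ℕ) := fun j =>
    if i0 ∈ A j ∧ w j i0 = w1 then 0
    else if i0 ∈ A j then Finsupp.single (ι j) (al * w j (ι j))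
    else Finsupp.single (ι j) (s * w j (ι j)) with hgdef
  set c : Fin n →₀ ℕ := Finsupp.single i0 (s * w1) + ∑ j, g j with hcdef
  have hnotmin : ∀ j, ¬ (i0 ∈ A j ∧ w j i0 = w1) → j ≠ jmin := by
    intro j h he
    exact h ⟨he ▸ hjmin0, he ▸ hjminw.symm⟩
  have hgi0 : ∀ j, g j i0 = 0 := by
    intro j
    rw [hgdef]; dsimp only
    by_cases h1 : i0 ∈ A j ∧ w j i0 = w1
    · rw [if_pos h1]; rfl
    · have hj := hnotmin j h1
      by_cases h2 : i0 ∈ A j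
      · rw [if_neg h1, if_pos h2]
        exact Finsupp.single_eq_of_ne' (hιne j hj)
      · rw [if_neg h1, if_neg h2]
        exact Finsupp.single_eq_of_ne' (hιne j hj)
  have hci0 : c i0 = s * w1 := by
    rw [hcdef, Finsupp.add_apply, Finsupp.single_eq_same, Finsupp.finset_sum_apply]
    rw [Finset.sum_eq_zero (fun j _ => hgi0 j), add_zero]
  have hcAmin : ∀ i ∈ A jmin, i ≠ i0 → c i = 0 := by
    intro i hi hne'
    rw [hcdef, Finsupp.add_apply, Finsupp.single_eq_of_ne' (Ne.symm hne'), Finsupp.finset_sum_apply,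
      zero_add]
    refine Finset.sum_eq_zero fun j _ => ?_
    rw [hgdef]; dsimp only
    by_cases h1 : i0 ∈ A j ∧ w j i0 = w1
    · rw [if_pos h1]; rfl
    · have hj := hnotmin j h1
      have hne3 : ι j ≠ i := fun he => (hι2 j hj) (he ▸ hi)
      by_cases h2 : i0 ∈ A j
      · rw [if_neg h1, if_pos h2]; exact Finsupp.single_eq_of_ne' hne3
      · rw [if_neg h1, if_neg h2]; exact Finsupp.single_eq_of_ne' hne3
  have hmaxcat : ¬ (i0 ∈ A jmax ∧ w jmax i0 = w1) := by
    rintro ⟨-, hww⟩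
    rw [← hjmaxw] at hww
    exact hw1w2.ne (hww ▸ rfl)
  have hcAmax : ∀ i ∈ A jmax, i ≠ i0 → i ≠ ι jmax → c i = 0 := by
    intro i hi hne' hne''
    rw [hcdef, Finsupp.add_apply, Finsupp.single_eq_of_ne' (Ne.symm hne'), Finsupp.finset_sum_apply,
      zero_add]
    refine Finset.sum_eq_zero fun j _ => ?_
    rw [hgdef]; dsimp only
    by_cases h1 : i0 ∈ A j ∧ w j i0 = w1
    · rw [if_pos h1]; rfl
    · have hj := hnotmin j h1
      by_cases h3 : j = jmax
      · subst h3
        rw [if_neg h1, if_pos hjmax0]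
        exact Finsupp.single_eq_of_ne' (Ne.symm hne'')
      · have hne3 : ι j ≠ i := fun he => (hι3 j hj h3) (he ▸ hi)
        by_cases h2 : i0 ∈ A j
        · rw [if_neg h1, if_pos h2]; exact Finsupp.single_eq_of_ne' hne3
        · rw [if_neg h1, if_neg h2]; exact Finsupp.single_eq_of_ne' hne3
  have hcιmax : c (ι jmax) ≤ al * w jmax (ι jmax) := by
    have hιmaxne : ι jmax ≠ i0 := hιne jmax (Ne.symm hjne)
    rw [hcdef, Finsupp.add_apply, Finsupp.single_eq_of_ne' (Ne.symm hιmaxne),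
      Finsupp.finset_sum_apply, zero_add]
    rw [Finset.sum_eq_single_of_mem jmax (Finset.mem_univ jmax)]
    · rw [hgdef]; dsimp only
      rw [if_neg hmaxcat, if_pos hjmax0, Finsupp.single_eq_same]
    · intro j _ hjj
      rw [hgdef]; dsimp only
      by_cases h1 : i0 ∈ A j ∧ w j i0 = w1
      · rw [if_pos h1]; rfl
      · have hj := hnotmin j h1
        have hne3 : ι j ≠ ι jmax := fun he => (hι3 j hj hjj) (he ▸ hι1 jmax)
        by_cases h2 : i0 ∈ A j
        · rw [if_neg h1, if_pos h2]; exact Finsupp.single_eq_of_ne' hne3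
        · rw [if_neg h1, if_neg h2]; exact Finsupp.single_eq_of_ne' hne3
  have hgle : ∀ j, g j ≤ c := by
    intro j
    rw [hcdef]
    calc g j ≤ ∑ j', g j' :=
          Finset.single_le_sum (f := g) (fun _ _ => zero_le) (Finset.mem_univ j)
      _ ≤ _ := le_add_self
  -- membership in ⨅ Q_j ^ s
  have hmem : monomial c (1 : K) ∈ ⨅ j, (qIdeal (K := K) (A j) (w j)) ^ s := by
    rw [Submodule.mem_iInf]
    intro j
    by_cases h1 : i0 ∈ A j ∧ w j i0 = w1
    · refine mon_mem_of_le' (d := Finsupp.single i0 (s * w j i0)) ?_ ?_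
      · rw [Finsupp.single_le_iff, hci0, h1.2]
      · have heq : monomial (Finsupp.single i0 (s * w j i0)) (1 : K)
            = ((X i0 : MvPolynomial (Fin n) K) ^ (w j i0)) ^ s := by
          rw [← pow_mul, X_pow_eq_monomial, mul_comm]
        rw [heq]
        exact Ideal.pow_mem_pow (Ideal.subset_span (Set.mem_image_of_mem _ (Finset.mem_coe.mpr h1.1))) s
    by_cases h2 : i0 ∈ A j
    · have hj := hnotmin j h1
      have hd_le : Finsupp.single (ι j) (al * w j (ι j)) + Finsupp.single i0 (w j i0) ≤ c := by
        rw [Finsupp.le_def]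
        intro i
        rw [Finsupp.add_apply]
        by_cases hi : i = i0
        · rw [hi, Finsupp.single_eq_of_ne' (hιne j hj), Finsupp.single_eq_same, zero_add, hci0]
          have hwS : w j i0 ∈ S0 := ⟨j, h2, rfl⟩
          exact (hle2 _ hwS).trans halpha.le
        · by_cases hi2 : i = ι j
          · subst hi2
            rw [Finsupp.single_eq_same, Finsupp.single_eq_of_ne' (Ne.symm hi), add_zero]
            have h3 := (Finsupp.le_def.mp (hgle j)) (ι j)
            rw [hgdef] at h3; dsimp only at h3
            rw [if_neg h1, if_pos h2, Finsupp.single_eq_same] at h3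
            exact h3
          · rw [Finsupp.single_eq_of_ne' (fun he => hi2 he.symm),
              Finsupp.single_eq_of_ne' (Ne.symm hi)]
            exact zero_le
      refine mon_mem_of_le' hd_le ?_
      have heq : monomial (Finsupp.single (ι j) (al * w j (ι j)) + Finsupp.single i0 (w j i0)) (1 : K)
          = ((X (ι j) : MvPolynomial (Fin n) K) ^ (w j (ι j))) ^ al * (X i0) ^ (w j i0) := by
        rw [← pow_mul, X_pow_eq_monomial, X_pow_eq_monomial, monomial_mul, one_mul,
          mul_comm (w j (ι j)) al]
      rw [heq, hs, pow_succ]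
      exact Ideal.mul_mem_mul
        (Ideal.pow_mem_pow (Ideal.subset_span (Set.mem_image_of_mem _ (Finset.mem_coe.mpr (hι1 j)))) al)
        (Ideal.subset_span (Set.mem_image_of_mem _ (Finset.mem_coe.mpr h2)))
    · refine mon_mem_of_le' (d := Finsupp.single (ι j) (s * w j (ι j))) ?_ ?_
      · rw [Finsupp.single_le_iff]
        have h3 := (Finsupp.le_def.mp (hgle j)) (ι j)
        rw [hgdef] at h3; dsimp only at h3
        rw [if_neg h1, if_neg h2, Finsupp.single_eq_same] at h3
        exact h3
      · have heq : monomial (Finsupp.single (ι j) (s * w j (ι j))) (1 : K)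
            = ((X (ι j) : MvPolynomial (Fin n) K) ^ (w j (ι j))) ^ s := by
          rw [← pow_mul, X_pow_eq_monomial, mul_comm]
        rw [heq]
        exact Ideal.pow_mem_pow (Ideal.subset_span (Set.mem_image_of_mem _ (Finset.mem_coe.mpr (hι1 j)))) s
  -- conclude
  intro hcontra
  have hpow : monomial c (1 : K) ∈ (⨅ j, qIdeal (K := K) (A j) (w j)) ^ s := hcontra hmem
  obtain ⟨f, hfI, hfle⟩ := exists_decomp_of_mem_pow' A w hpow
  have hfc : ∀ t < s, ∀ i, f t i ≤ c i := by
    intro t ht i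
    calc f t i ≤ (∑ t' ∈ Finset.range s, f t') i := by
          rw [Finsupp.finset_sum_apply]
          exact Finset.single_le_sum (f := fun t' => f t' i) (fun _ _ => zero_le)
            (Finset.mem_range.mpr ht)
      _ ≤ c i := (Finsupp.le_def.mp hfle) i
  have hstep1 : ∀ t < s, w1 ≤ f t i0 := by
    intro t ht
    obtain ⟨i, hiA, hwle⟩ := hfI t ht jmin
    by_cases hi : i = i0
    · rw [hi] at hwle; rw [hjminw]; exact hwle
    · exfalso
      have h0 := hfc t ht i
      rw [hcAmin i hiA hi] at h0
      have := hwpos jmin i hiA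
      omega
  have hsum0 : ∑ t ∈ Finset.range s, f t i0 ≤ s * w1 := by
    have h := (Finsupp.le_def.mp hfle) i0
    rw [Finsupp.finset_sum_apply] at h
    rw [hci0] at h
    exact h
  have hstep2 : ∀ t < s, f t i0 < w2 := by
    intro t ht
    by_contra hge
    push_neg at hge
    have h1 : ∑ t' ∈ (Finset.range s).erase t, f t' i0 + f t i0
        = ∑ t' ∈ Finset.range s, f t' i0 :=
      Finset.sum_erase_add _ _ (Finset.mem_range.mpr ht)
    have hcard : ((Finset.range s).erase t).card = s - 1 := by
      rw [Finset.card_erase_of_mem (Finset.mem_range.mpr ht), Finset.card_range]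
    have h2 : (s - 1) * w1 ≤ ∑ t' ∈ (Finset.range s).erase t, f t' i0 := by
      calc (s - 1) * w1 = ∑ _t' ∈ (Finset.range s).erase t, w1 := by
            rw [Finset.sum_const, hcard, smul_eq_mul]
        _ ≤ _ := Finset.sum_le_sum fun t' ht' =>
            hstep1 t' (Finset.mem_range.mp (Finset.mem_of_mem_erase ht'))
    have h3' : (s - 1) * w1 + w2 ≤ ∑ t' ∈ Finset.range s, f t' i0 := by
      rw [← h1]; exact add_le_add h2 hge
    have h3 : (s - 1) * w1 + w2 ≤ s * w1 := le_trans h3' hsum0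
    have h4 : s * w1 = (s - 1) * w1 + w1 := by
      rw [hs, Nat.add_sub_cancel, Nat.succ_mul]
    rw [h4] at h3
    have h5 := Nat.le_of_add_le_add_left h3
    exact absurd h5 (Nat.not_le.mpr hw1w2)
  have hstep3 : ∀ t < s, w jmax (ι jmax) ≤ f t (ι jmax) := by
    intro t ht
    obtain ⟨i, hiA, hwle⟩ := hfI t ht jmax
    by_cases hi : i = i0
    · exfalso
      rw [hi] at hwle
      have := hstep2 t ht
      rw [← hjmaxw] at hwle
      omega
    by_cases hi2 : i = ι jmax
    · subst hi2; exact hwle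
    · exfalso
      have h0 := hfc t ht i
      rw [hcAmax i hiA hi hi2] at h0
      have := hwpos jmax i hiA
      omega
  have hfinal : s * w jmax (ι jmax) ≤ ∑ t ∈ Finset.range s, f t (ι jmax) := by
    calc s * w jmax (ι jmax) = ∑ _t ∈ Finset.range s, w jmax (ι jmax) := by
          rw [Finset.sum_const, Finset.card_range, smul_eq_mul]
      _ ≤ _ := Finset.sum_le_sum fun t ht => hstep3 t (Finset.mem_range.mp ht)
  have hub : ∑ t ∈ Finset.range s, f t (ι jmax) ≤ al * w jmax (ι jmax) := by
    have h := (Finsupp.le_def.mp hfle) (ι jmax)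
    rw [Finsupp.finset_sum_apply] at h
    exact le_trans h hcιmax
  have hwpos' : 0 < w jmax (ι jmax) := hwpos jmax _ (hι1 jmax)
  have hkey : s * w jmax (ι jmax) ≤ al * w jmax (ι jmax) := le_trans hfinal hub
  rw [hs, Nat.succ_mul] at hkey
  have hkey2 : al * w jmax (ι jmax) + w jmax (ι jmax) ≤ al * w jmax (ι jmax) + 0 := by
    rw [add_zero]; exact hkey
  have := Nat.le_of_add_le_add_left hkey2
  omega
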